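/- arXiv:2009.13651 — 2 statements merged into one kernel-verified Lean document; each statement's English description precedes it below -/
import Mathlib

section
/- Let G be a group and let K be a nontrivial finite normal subgroup of G. Then the finitely supported function f = χ_K − |K|·δ_1 (where δ_1 is the point mass at the identity) is nonzero and satisfies ∑_{k ∈ K} f(g·k·h) = 0 for all g, h ∈ G; in particular, K is not an F(G)-Pompeiu set, and more generally K is not a C-Pompeiu set for any class of functions C containing the finitely supported functions. -/
open scoped Classical

/-- Proposition 2.3: if `N` is a nontrivial finite normal subgroup of `G`, then the
finitely supported function `f = χ_N − |N|·δ_1` is nonzero and has vanishing two-sided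
Pompeiu sums over `N`; consequently `N` is not a `C`-Pompeiu set for any class `C` of
functions containing the finitely supported functions (in particular not an
`F(G)`-Pompeiu set). -/
theorem finite_normal_not_pompeiu {G : Type*} [Group G] (N : Subgroup G) [N.Normal]
    (hfin : (N : Set G).Finite) (hnt : N ≠ ⊥) :
    let f : G → ℂ := fun x =>
      (if x ∈ N then (1 : ℂ) else 0) - (hfin.toFinset.card : ℂ) * (if x = 1 then 1 else 0)
    f ≠ 0 ∧
    (∀ g h : G, ∑ k ∈ hfin.toFinset, f (g * k * h) = 0) ∧
    ∀ C : Set (G → ℂ), {u : G → ℂ | (Function.support u).Finite} ⊆ C →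
      ¬ (∀ u ∈ C, (∀ g h : G, ∑ k ∈ hfin.toFinset, u (g * k * h) = 0) → u = 0) := by
  intro f
  have hmem : ∀ x, x ∈ hfin.toFinset ↔ x ∈ N := by
    intro x; simp [Set.Finite.mem_toFinset]
  -- card ≥ 2
  have hcard : 2 ≤ hfin.toFinset.card := by
    obtain ⟨x, hxN, hx1⟩ : ∃ x ∈ N, x ≠ 1 := by
      by_contra h
      push_neg at h
      exact hnt (Subgroup.eq_bot_iff_forall N |>.mpr h)
    have h1 : (1 : G) ∈ hfin.toFinset := (hmem 1).mpr N.one_mem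
    have hx : x ∈ hfin.toFinset := (hmem x).mpr hxN
    have := Finset.one_lt_card_iff.mpr ⟨x, 1, hx, h1, hx1⟩
    omega
  have hfne : f ≠ 0 := by
    intro h
    have h1 : (1:ℂ) - (hfin.toFinset.card : ℂ) = 0 := by
      have := congrFun h 1
      simpa [f, N.one_mem] using this
    have : (hfin.toFinset.card : ℂ) = 1 := by linear_combination -h1
    have : (hfin.toFinset.card : ℕ) = 1 := by exact_mod_cast this
    omega
  have hsum : ∀ g h : G, ∑ k ∈ hfin.toFinset, f (g * k * h) = 0 := by
    intro g h
    have hcond : ∀ k ∈ hfin.toFinset, (g * k * h ∈ N ↔ g * h ∈ N) := by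
      intro k hk
      have hkN : k ∈ N := (hmem k).mp hk
      have hconj : g * k * g⁻¹ ∈ N := Subgroup.Normal.conj_mem ‹N.Normal› k hkN g
      constructor
      · intro hmem'
        have : (g * k * g⁻¹)⁻¹ * (g * k * h) ∈ N := N.mul_mem (N.inv_mem hconj) hmem'
        simpa [mul_assoc] using this
      · intro hmem'
        have : (g * k * g⁻¹) * (g * h) ∈ N := N.mul_mem hconj hmem'
        simpa [mul_assoc] using this
    have heq1 : ∀ k, g * k * h = 1 ↔ k = g⁻¹ * h⁻¹ := by
      intro k
      constructor
      · intro hk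
        have := congrArg (fun y => g⁻¹ * y * h⁻¹) hk
        simpa [mul_assoc] using this
      · intro hk; subst hk; group
    have hih : g⁻¹ * h⁻¹ ∈ N ↔ g * h ∈ N := by
      constructor
      · intro hm
        have : (g⁻¹ * h⁻¹)⁻¹ ∈ N := N.inv_mem hm
        have h2 : h * g ∈ N := by simpa using this
        have : g * (h * g) * g⁻¹ ∈ N := Subgroup.Normal.conj_mem ‹N.Normal› _ h2 g
        simpa [mul_assoc] using this
      · intro hm
        have : g⁻¹ * (g * h) * g⁻¹⁻¹ ∈ N := Subgroup.Normal.conj_mem ‹N.Normal› _ hm g⁻¹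
        have h2 : h * g ∈ N := by simpa [mul_assoc] using this
        have := N.inv_mem h2
        simpa [mul_inv_rev] using this
    simp only [f]
    rw [Finset.sum_sub_distrib, ← Finset.mul_sum]
    have hA : (∑ k ∈ hfin.toFinset, if g * k * h ∈ N then (1:ℂ) else 0)
        = if g * h ∈ N then (hfin.toFinset.card : ℂ) else 0 := by
      rw [Finset.sum_congr rfl (fun k hk => by rw [if_congr (hcond k hk) rfl rfl])]
      simp [Finset.sum_ite_eq]
    have hB : (∑ k ∈ hfin.toFinset, if g * k * h = 1 then (1:ℂ) else 0)
        = if g * h ∈ N then 1 else 0 := by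
      rw [Finset.sum_congr rfl (fun k _ => by rw [if_congr (heq1 k) rfl rfl])]
      rw [Finset.sum_ite_eq' hfin.toFinset (g⁻¹ * h⁻¹) (fun _ => (1:ℂ))]
      rw [if_congr ((hmem _).trans hih) rfl rfl]
    rw [hA, hB]
    split <;> simp
  refine ⟨hfne, hsum, ?_⟩
  intro C hC hP
  have hfC : f ∈ C := by
    apply hC
    have : Function.support f ⊆ (N : Set G) := by
      intro x hx
      by_contra hxN
      have hx1 : x ≠ 1 := fun h => hxN (h ▸ N.one_mem)
      simp [f, Function.mem_support, hxN, hx1] at hx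
      exact hxN hx
    exact Set.Finite.subset hfin this
  exact hfne (hP f hfC hsum)
end

section
/- Let G be a group such that the only two-sided ideals of the complex group algebra ℂ[G] are {0}, the augmentation ideal ω(ℂG), and ℂ[G] itself. Then G is an F(G)-Pompeiu group, i.e., every nonempty finite subset of G is an F(G)-Pompeiu set. -/
/-- If the only two-sided ideals of the complex group algebra `ℂ[G]` are `{0}`, the
augmentation ideal (the kernel of the augmentation homomorphism sending `∑ a_g g` to
`∑ a_g`, i.e. the algebra map induced by the trivial monoid homomorphism `G →* ℂ`),
and `ℂ[G]` itself, then `G` is an `F(G)`-Pompeiu group: every nonempty finite subset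
of `G` is an `F(G)`-Pompeiu set. -/
theorem pompeiu_group_of_ideals {G : Type*} [Group G]
    (hId : ∀ I : TwoSidedIdeal (MonoidAlgebra ℂ G),
      I = ⊥ ∨
      (I : Set (MonoidAlgebra ℂ G)) =
        {x : MonoidAlgebra ℂ G | MonoidAlgebra.lift ℂ ℂ G 1 x = 0} ∨
      I = ⊤) :
    ∀ K : Finset G, K.Nonempty →
      ∀ f : G → ℂ, (∀ g h : G, ∑ k ∈ K, f (g * k * h) = 0) → f = 0 := by
  intro K hK f hf
  classical
  set Φ : MonoidAlgebra ℂ G →ₗ[ℂ] ℂ := (Finsupp.linearCombination ℂ f).comp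
    (MonoidAlgebra.coeffLinearEquiv ℂ).toLinearMap with hΦ
  have hΦsingle : ∀ (x : G) (c : ℂ), Φ (MonoidAlgebra.single x c) = c * f x := by
    intro x c
    show Finsupp.linearCombination ℂ f (Finsupp.single x c) = c * f x
    rw [Finsupp.linearCombination_single, smul_eq_mul]
  set a : MonoidAlgebra ℂ G := ∑ k ∈ K, MonoidAlgebra.single k (1 : ℂ) with ha
  have key : ∀ g h : G,
      Φ (MonoidAlgebra.single g (1 : ℂ) * a * MonoidAlgebra.single h (1 : ℂ)) = 0 := by
    intro g h
    rw [ha, Finset.mul_sum, Finset.sum_mul, map_sum]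
    have : ∀ k ∈ K, Φ (MonoidAlgebra.single g (1 : ℂ) * MonoidAlgebra.single k (1 : ℂ) *
        MonoidAlgebra.single h (1 : ℂ)) = f (g * k * h) := by
      intro k _
      rw [MonoidAlgebra.single_mul_single, MonoidAlgebra.single_mul_single, one_mul, one_mul,
        hΦsingle, one_mul]
    rw [Finset.sum_congr rfl this, hf]
  -- general annihilation
  have keyCD : ∀ c d : MonoidAlgebra ℂ G, Φ (c * a * d) = 0 := by
    intro c
    induction c using MonoidAlgebra.induction_linear with
    | zero => intro d; simp
    | add p q hp hq => intro d; rw [add_mul, add_mul, map_add, hp, hq, add_zero]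
    | single g r =>
      intro d
      induction d using MonoidAlgebra.induction_linear with
      | zero => simp
      | add p q hp hq => rw [mul_add, map_add, hp, hq, add_zero]
      | single h s =>
        have h1 : (MonoidAlgebra.single g r : MonoidAlgebra ℂ G) =
            r • MonoidAlgebra.single g (1 : ℂ) := by simp [MonoidAlgebra.smul_single']
        have h2 : (MonoidAlgebra.single h s : MonoidAlgebra ℂ G) =
            s • MonoidAlgebra.single h (1 : ℂ) := by simp [MonoidAlgebra.smul_single']
        rw [h1, h2, smul_mul_assoc, smul_mul_assoc, mul_smul_comm, map_smul, map_smul,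
          key, smul_zero, smul_zero]
  set J : TwoSidedIdeal (MonoidAlgebra ℂ G) :=
    TwoSidedIdeal.mk' {b | ∀ c d : MonoidAlgebra ℂ G, Φ (c * b * d) = 0}
      (by intro c d; simp)
      (by intro x y hx hy c d; rw [mul_add, add_mul, map_add, hx, hy, add_zero])
      (by intro x hx c d; rw [mul_neg, neg_mul, map_neg, hx, neg_zero])
      (by intro x y hy c d; rw [← mul_assoc]; exact hy (c * x) d)
      (by intro x y hx c d; rw [← mul_assoc, mul_assoc]; exact hx c (y * d)) with hJ
  have haJ : a ∈ J := by
    rw [hJ, TwoSidedIdeal.mem_mk']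
    exact keyCD
  have haug : MonoidAlgebra.lift ℂ ℂ G 1 a ≠ 0 := by
    rw [ha, map_sum]
    have : ∀ k ∈ K, (MonoidAlgebra.lift ℂ ℂ G 1) (MonoidAlgebra.single k (1:ℂ)) = 1 := by
      intro k _; simp [MonoidAlgebra.lift_single]
    rw [Finset.sum_congr rfl this, Finset.sum_const, nsmul_eq_mul, mul_one]
    exact_mod_cast Nat.cast_ne_zero.mpr (Finset.card_ne_zero_of_mem hK.choose_spec)
  have haNe : a ≠ 0 := fun h0 => haug (by rw [h0, map_zero])
  rcases hId J with h | h | h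
  · rw [h, TwoSidedIdeal.mem_bot] at haJ
    exact absurd haJ haNe
  · exfalso
    have : a ∈ (J : Set (MonoidAlgebra ℂ G)) := haJ
    rw [h] at this
    exact haug this
  · have h1 : (1 : MonoidAlgebra ℂ G) ∈ J := h ▸ TwoSidedIdeal.mem_top _
    rw [hJ, TwoSidedIdeal.mem_mk'] at h1
    funext x
    have := h1 (MonoidAlgebra.single x (1 : ℂ)) 1
    rw [mul_one, mul_one, hΦsingle, one_mul] at this
    simpa using this
end
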